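/- For every t > 0, every x = (x_1,x_2) in R^2, and all vectors Psi, Phi in C^2, one has the exact identity ( Psi + (x_a/t) gamma^0 gamma^a Psi )^* gamma^0 ( Phi + (x_b/t) gamma^0 gamma^b Phi ) = ( (t^2 - |x|^2) / t^2 ) Psi^* gamma^0 Phi, where repeated Roman indices a, b are summed over 1,2. -/

import Mathlib

noncomputable section

open MeasureTheory Matrix Finset Real Filter

/-- Spacetime `ℝ^{1+2}`: coordinate `0` is time, coordinates `1, 2` are space. -/
abbrev Spt : Type := Fin 3 → ℝ
/-- Space `ℝ²`. -/
abbrev Sp : Type := Fin 2 → ℝ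
/-- Spinor space `ℂ²`. -/
abbrev Spinor : Type := Fin 2 → ℂ

/-- Minkowski metric `g = diag(-1, 1, 1)`. -/
def mink (μ ν : Fin 3) : ℝ := if μ = ν then (if μ = 0 then -1 else 1) else 0

/-- A choice of `2 × 2` complex Dirac matrices `γ^0, γ^1, γ^2` satisfying
`γ^μ γ^ν + γ^ν γ^μ = -2 g^{μν} I₂` and `(γ^μ)^* = -g_{μν} γ^ν`. -/
structure DiracMatrices where
  γ : Fin 3 → Matrix (Fin 2) (Fin 2) ℂ
  clifford : ∀ μ ν, γ μ * γ ν + γ ν * γ μ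
      = ((-2 * mink μ ν : ℝ) : ℂ) • (1 : Matrix (Fin 2) (Fin 2) ℂ)
  adjoint : ∀ μ, (γ μ)ᴴ = ((-(mink μ μ) : ℝ) : ℂ) • γ μ

/-- Partial derivative `∂_μ` of a function on spacetime. -/
def pt {V : Type*} [NormedAddCommGroup V] [NormedSpace ℝ V] (μ : Fin 3) (f : Spt → V) :
    Spt → V :=
  fun p => fderiv ℝ f p (Pi.single μ 1)

/-- `|x|²` for spatial points. -/
def xrsq (x : Sp) : ℝ := ∑ a : Fin 2, (x a) ^ 2

/-- `|x|²` of the spatial part of a spacetime point. -/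
def rsq (p : Spt) : ℝ := ∑ a : Fin 2, (p a.succ) ^ 2

/-- The interior of the light cone, `K = {(t,x) : t ≥ 2, |x| < t - 1}`. -/
def inK (p : Spt) : Prop := 2 ≤ p 0 ∧ Real.sqrt (rsq p) < p 0 - 1

/-- Parametrization of the hyperboloid `H_s` by space: `x ↦ (√(s² + |x|²), x)`. -/
def onH (s : ℝ) (x : Sp) : Spt := Fin.cons (Real.sqrt (s ^ 2 + xrsq x)) x

/-- Squared pointwise (Euclidean) norm of a spinor, `ψ^* ψ`. -/
def snormSq (v : Spinor) : ℝ := ∑ i : Fin 2, Complex.normSq (v i)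

/-- The sesquilinear expression `v^* γ^0 w`. -/
def bil (Γ : DiracMatrices) (v w : Spinor) : ℂ := star v ⬝ᵥ (Γ.γ 0).mulVec w

/-- The Dirac operator with mass: `i γ^μ ∂_μ ψ + m ψ`. -/
def dirac (Γ : DiracMatrices) (m : ℝ) (ψ : Spt → Spinor) : Spt → Spinor :=
  fun p => (∑ μ : Fin 3, Complex.I • (Γ.γ μ).mulVec (pt μ ψ p)) + (m : ℂ) • ψ p

/-- The Soler nonlinearity `(ψ^* γ^0 ψ) ψ`. -/
def soler (Γ : DiracMatrices) (ψ : Spt → Spinor) : Spt → Spinor :=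
  fun p => bil Γ (ψ p) (ψ p) • ψ p

/-- Lorentz boost `L_a = t ∂_a + x_a ∂_t`. -/
def Lb {V : Type*} [NormedAddCommGroup V] [NormedSpace ℝ V] (a : Fin 2) (f : Spt → V) :
    Spt → V :=
  fun p => p 0 • pt a.succ f p + p a.succ • pt 0 f p

/-- Modified Lorentz boost `hat L_a = L_a - (1/2) γ^0 γ^a`. -/
def hatLb (Γ : DiracMatrices) (a : Fin 2) (f : Spt → Spinor) : Spt → Spinor :=
  fun p => Lb a f p - (1 / 2 : ℂ) • (Γ.γ 0 * Γ.γ a.succ).mulVec (f p)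

/-- Semi-hyperboloidal derivative `underline ∂_a = (x_a/t) ∂_t + ∂_a`. -/
def und {V : Type*} [NormedAddCommGroup V] [NormedSpace ℝ V] (a : Fin 2) (f : Spt → V) :
    Spt → V :=
  fun p => (p a.succ / p 0) • pt 0 f p + pt a.succ f p

/-- Iterated translations `∂^I`. -/
def ptList {V : Type*} [NormedAddCommGroup V] [NormedSpace ℝ V] (I : List (Fin 3))
    (f : Spt → V) : Spt → V :=
  I.foldr (fun μ g => pt μ g) f

/-- Iterated Lorentz boosts `L^J`. -/
def LbList {V : Type*} [NormedAddCommGroup V] [NormedSpace ℝ V] (J : List (Fin 2))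
    (f : Spt → V) : Spt → V :=
  J.foldr (fun a g => Lb a g) f

/-- Iterated modified Lorentz boosts `hat L^J`. -/
def hatLbList (Γ : DiracMatrices) (J : List (Fin 2)) (f : Spt → Spinor) : Spt → Spinor :=
  J.foldr (fun a g => hatLb Γ a g) f

/-- `(v)_- = v - (x_a/t) γ^0 γ^a v` (with explicit `t`, `x`). -/
def tMinusX (Γ : DiracMatrices) (t : ℝ) (x : Sp) (v : Spinor) : Spinor :=
  v - ∑ a : Fin 2, (x a / t) • (Γ.γ 0 * Γ.γ a.succ).mulVec v

/-- `(v)_+ = v + (x_a/t) γ^0 γ^a v` (with explicit `t`, `x`). -/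
def tPlusX (Γ : DiracMatrices) (t : ℝ) (x : Sp) (v : Spinor) : Spinor :=
  v + ∑ a : Fin 2, (x a / t) • (Γ.γ 0 * Γ.γ a.succ).mulVec v

/-- `(v)_-` at a spacetime point. -/
def tMinus (Γ : DiracMatrices) (p : Spt) (v : Spinor) : Spinor :=
  tMinusX Γ (p 0) (fun a => p a.succ) v

/-- `[v]_- = v - (x_j/r) γ^0 γ^j v`. -/
def rMinus (Γ : DiracMatrices) (x : Sp) (v : Spinor) : Spinor :=
  v - ∑ a : Fin 2, (x a / Real.sqrt (xrsq x)) • (Γ.γ 0 * Γ.γ a.succ).mulVec v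

/-- `[v]_+ = v + (x_j/r) γ^0 γ^j v`. -/
def rPlus (Γ : DiracMatrices) (x : Sp) (v : Spinor) : Spinor :=
  v + ∑ a : Fin 2, (x a / Real.sqrt (xrsq x)) • (Γ.γ 0 * Γ.γ a.succ).mulVec v

/-- Hyperboloidal Dirac energy density `ψ^* ψ - (x_a/t) ψ^* γ^0 γ^a ψ`. -/
def EDdens (Γ : DiracMatrices) (ψ : Spt → Spinor) (p : Spt) : ℝ :=
  (star (ψ p) ⬝ᵥ ψ p
    - ∑ a : Fin 2, ((p a.succ / p 0 : ℝ) : ℂ)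
        * (star (ψ p) ⬝ᵥ (Γ.γ 0 * Γ.γ a.succ).mulVec (ψ p))).re

/-- The hyperboloidal Dirac energy `E^D(s, ψ)`. -/
def ED (Γ : DiracMatrices) (s : ℝ) (ψ : Spt → Spinor) : ℝ :=
  ∫ x : Sp, EDdens Γ ψ (onH s x)

/-- The energy `E^+(s, ψ) = ∫_{H_s} (ψ)_-^* (ψ)_-`. -/
def Eplus (Γ : DiracMatrices) (s : ℝ) (ψ : Spt → Spinor) : ℝ :=
  ∫ x : Sp, snormSq (tMinus Γ (onH s x) (ψ (onH s x)))

/-- The `L²_f(H_s)` norm of a spinor field. -/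
def L2f (s : ℝ) (f : Spt → Spinor) : ℝ :=
  Real.sqrt (∫ x : Sp, snormSq (f (onH s x)))

/-- Spatial partial derivative for functions on `ℝ²`. -/
def spd (a : Fin 2) (f : Sp → Spinor) : Sp → Spinor :=
  fun x => fderiv ℝ f x (Pi.single a 1)

/-- Squared Sobolev `H^k` norm: sum over spatial multi-indices `|α| ≤ k` of
`‖∂^α f‖_{L²(ℝ²)}²`. -/
def sobNormSq (k : ℕ) (f : Sp → Spinor) : ℝ :=
  ∑ i ∈ Finset.range (k + 1), ∑ j ∈ Finset.range (k + 1 - i),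
    ∫ x : Sp, snormSq ((spd 0)^[i] ((spd 1)^[j] f) x)

/-- The Sobolev `H^k` norm. -/
def sobNorm (k : ℕ) (f : Sp → Spinor) : ℝ := Real.sqrt (sobNormSq k f)

/-- Membership in `H^k(ℝ²; ℂ²)`: all derivatives of order `≤ k` are in `L²`. -/
def sobMem (k : ℕ) (f : Sp → Spinor) : Prop :=
  ∀ i j : ℕ, i + j ≤ k → MemLp ((spd 0)^[i] ((spd 1)^[j] f)) 2 (volume : Measure Sp)

/-- The time-`t` slice of a spacetime function. -/
def timeSlice (ψ : Spt → Spinor) (t : ℝ) : Sp → Spinor := fun x => ψ (Fin.cons t x)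

/-- The wave operator `□ = -∂_t ∂_t + Δ`. -/
def waveOp {V : Type*} [NormedAddCommGroup V] [NormedSpace ℝ V] (u : Spt → V) : Spt → V :=
  fun p => -(pt 0 (pt 0 u) p) + ∑ a : Fin 2, pt a.succ (pt a.succ u) p

/-- The operator `K = s ∂_s + 2 x^a underline∂_a`, written on the hyperboloid `H_s`
(where `s ∂_s = (s²/t) ∂_t`). -/
def Kop (s : ℝ) (u : Spt → Spinor) : Spt → Spinor :=
  fun p => (s ^ 2 / p 0) • pt 0 u p + (2 : ℝ) • ∑ a : Fin 2, p a.succ • und a u p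

/-- The conformal energy on `H_s`. -/
def Econ (s : ℝ) (u : Spt → Spinor) : ℝ :=
  ∫ x : Sp, ((∑ a : Fin 2, s ^ 2 * snormSq (und a u (onH s x)))
    + snormSq (Kop s u (onH s x) + u (onH s x)))

/-- The `(·)_+`–`(·)_+` interaction carries the factor `(t² - |x|²)/t²`. -/
theorem plus_plus_interaction_identity
    (Γ : DiracMatrices) (t : ℝ) (ht : 0 < t) (x : Sp) (Ψ Φ : Spinor) :
    star (Ψ + ∑ a : Fin 2, (x a / t) • (Γ.γ 0 * Γ.γ a.succ).mulVec Ψ)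
        ⬝ᵥ (Γ.γ 0).mulVec (Φ + ∑ b : Fin 2, (x b / t) • (Γ.γ 0 * Γ.γ b.succ).mulVec Φ)
      = (((t ^ 2 - xrsq x) / t ^ 2 : ℝ) : ℂ) * (star Ψ ⬝ᵥ (Γ.γ 0).mulVec Φ) := by
  set g0 := Γ.γ 0 with hg0
  set g1 := Γ.γ 1 with hg1
  set g2 := Γ.γ 2 with hg2
  have h00 : g0 * g0 = 1 := by
    have h := Γ.clifford 0 0
    simp [mink] at h
    rw [← two_smul ℂ] at h
    exact smul_right_injective _ two_ne_zero h
  have h11 : g1 * g1 = -1 := by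
    have h := Γ.clifford 1 1
    simp [mink] at h
    rw [← two_smul ℂ, ← smul_neg] at h
    exact smul_right_injective _ two_ne_zero h
  have h22 : g2 * g2 = -1 := by
    have h := Γ.clifford 2 2
    simp [mink] at h
    rw [← two_smul ℂ, ← smul_neg] at h
    exact smul_right_injective _ two_ne_zero h
  have h10 : g1 * g0 = -(g0 * g1) := by
    have h := Γ.clifford 0 1
    simp [mink] at h
    exact eq_neg_of_add_eq_zero_right h
  have h20 : g2 * g0 = -(g0 * g2) := by
    have h := Γ.clifford 0 2
    simp [mink] at h
    exact eq_neg_of_add_eq_zero_right h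
  have h21 : g2 * g1 = -(g1 * g2) := by
    have h := Γ.clifford 1 2
    simp [mink] at h
    exact eq_neg_of_add_eq_zero_right h
  have a0 : g0ᴴ = g0 := by
    have h := Γ.adjoint 0
    simpa [mink] using h
  have a1 : g1ᴴ = -g1 := by
    have h := Γ.adjoint 1
    simpa [mink] using h
  have a2 : g2ᴴ = -g2 := by
    have h := Γ.adjoint 2
    simpa [mink] using h
  set c1 : ℂ := ((x 0 / t : ℝ) : ℂ) with hc1
  set c2 : ℂ := ((x 1 / t : ℝ) : ℂ) with hc2
  set A : Matrix (Fin 2) (Fin 2) ℂ := c1 • (g0 * g1) + c2 • (g0 * g2) with hA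
  have hplus : ∀ v : Spinor,
      (v + ∑ a : Fin 2, (x a / t) • (g0 * Γ.γ a.succ) *ᵥ v) = (1 + A) *ᵥ v := by
    intro v
    have rsmul : ∀ (r : ℝ) (w : Spinor), r • w = (r : ℂ) • w := by
      intro r w; funext i; simp [Complex.real_smul]
    rw [add_mulVec, one_mulVec, hA, add_mulVec, Fin.sum_univ_two,
      Fin.succ_zero_eq_one, Fin.succ_one_eq_two, smul_mulVec,
      smul_mulVec, rsmul, rsmul, ← hc1, ← hc2]
  have hAH : Aᴴ = A := by
    rw [hA]
    simp [conjTranspose_smul, conjTranspose_mul, a0, a1, a2, hc1, hc2,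
      Complex.star_def, Complex.conj_ofReal, mul_neg, neg_mul, h10, h20]
  have key : (1 + A) * (g0 * (1 + A)) = ((1 : ℂ) - c1 ^ 2 - c2 ^ 2) • g0 := by
    have e1 : g0 * (g0 * g1) = g1 := by rw [← mul_assoc, h00, one_mul]
    have e2 : g0 * (g0 * g2) = g2 := by rw [← mul_assoc, h00, one_mul]
    have b1g0 : (g0 * g1) * g0 = -g1 := by
      rw [mul_assoc, h10, mul_neg, ← mul_assoc, h00, one_mul]
    have b2g0 : (g0 * g2) * g0 = -g2 := by
      rw [mul_assoc, h20, mul_neg, ← mul_assoc, h00, one_mul]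
    have b1g1 : (g0 * g1) * g1 = -g0 := by
      rw [mul_assoc, h11, mul_neg, mul_one]
    have b2g2 : (g0 * g2) * g2 = -g0 := by
      rw [mul_assoc, h22, mul_neg, mul_one]
    have b1g2 : (g0 * g1) * g2 = g0 * (g1 * g2) := by rw [mul_assoc]
    have b2g1 : (g0 * g2) * g1 = -(g0 * (g1 * g2)) := by
      rw [mul_assoc, h21, mul_neg]
    rw [hA]
    simp only [add_mul, mul_add, one_mul, mul_one, smul_mul_assoc, mul_smul_comm,
      smul_smul, e1, e2, b1g0, b2g0, b1g1, b2g2, b1g2, b2g1, mul_neg, neg_mul,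
      smul_neg]
    module
  have hAH1 : (1 + A)ᴴ = 1 + A := by rw [conjTranspose_add, conjTranspose_one, hAH]
  have hcoef : (((t ^ 2 - xrsq x) / t ^ 2 : ℝ) : ℂ) = (1 : ℂ) - c1 ^ 2 - c2 ^ 2 := by
    have ht' : (t : ℝ) ≠ 0 := ne_of_gt ht
    have hr : (t ^ 2 - xrsq x) / t ^ 2 = 1 - (x 0 / t) ^ 2 - (x 1 / t) ^ 2 := by
      field_simp [xrsq, Fin.sum_univ_two]
      simp only [xrsq, Fin.sum_univ_two]
      ring
    rw [hc1, hc2, hr]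
    push_cast
    ring
  rw [hplus Ψ, hplus Φ, mulVec_mulVec, star_mulVec, dotProduct_mulVec,
    vecMul_vecMul, hAH1, key, hcoef, ← dotProduct_mulVec, smul_mulVec,
    dotProduct_smul, smul_eq_mul]
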